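/- Let α, β be weak compositions of n, let M be a k × l nonnegative-integer matrix with row sums α and column sums β, and let F, F' be partial flags of types α, β in k^n with relative position M. Then the set of nilpotent endomorphisms N of k^n strictly compatible with both F and F' (i.e., N(F_i) ⊆ F_{i−1} and N(F'_j) ⊆ F'_{j−1} for all i, j) is a linear subspace of dimension Σ_{1 ≤ i < i' ≤ k, 1 ≤ j < j' ≤ l} M_{i,j} M_{i',j'} (after conjugating to a standard pair of flags). -/

import Mathlib

open Submodule Module

lemma aux_swap (k : ℕ) (f : ℕ → ℕ → ℕ) :
    ∑ i ∈ Finset.range k, ∑ a ∈ Finset.range i, f a i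
      = ∑ a ∈ Finset.range k, ∑ i ∈ Finset.Ioo a k, f a i := by
  apply Finset.sum_comm'
  intro i a
  simp only [Finset.mem_range, Finset.mem_Ioo]
  omega

lemma aux_extend {𝕜 V : Type*} [Field 𝕜] [AddCommGroup V] [Module 𝕜 V]
    [FiniteDimensional 𝕜 V] (m : ℕ) :
    ∀ B A : Submodule 𝕜 V, B ≤ A → finrank 𝕜 A = finrank 𝕜 B + m →
      ∃ f : Fin m → V, (∀ t, f t ∈ A) ∧ B ⊔ span 𝕜 (Set.range f) = A := by
  induction m with
  | zero =>
    intro B A hBA hdim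
    refine ⟨Fin.elim0, fun t => t.elim0, ?_⟩
    rw [Set.range_eq_empty, span_empty, sup_bot_eq]
    exact Submodule.eq_of_le_of_finrank_eq hBA (by omega)
  | succ m ih =>
    intro B A hBA hdim
    have hne : B ≠ A := fun h => by rw [h] at hdim; omega
    obtain ⟨x, hxA, hxB⟩ : ∃ x ∈ A, x ∉ B := by
      by_contra h
      push_neg at h
      exact hne (le_antisymm hBA h)
    have hx0 : x ≠ 0 := fun h => hxB (h ▸ B.zero_mem)
    have hdisj : B ⊓ span 𝕜 {x} = ⊥ := by
      rw [eq_bot_iff]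
      rintro y ⟨hyB, hy⟩
      obtain ⟨c, rfl⟩ := Submodule.mem_span_singleton.mp hy
      rcases eq_or_ne c 0 with rfl | hc
      · simp
      · exact absurd (by simpa [hc] using B.smul_mem c⁻¹ hyB) hxB
    have hrk : finrank 𝕜 (B ⊔ span 𝕜 {x} : Submodule 𝕜 V) = finrank 𝕜 B + 1 := by
      have := Submodule.finrank_sup_add_finrank_inf_eq B (span 𝕜 {x})
      rw [hdisj, finrank_bot, finrank_span_singleton hx0] at this
      omega
    have hle : B ⊔ span 𝕜 {x} ≤ A := sup_le hBA (span_le.mpr (by simpa using hxA))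
    obtain ⟨f, hf1, hf2⟩ := ih (B ⊔ span 𝕜 {x}) A hle (by omega)
    refine ⟨Fin.cons x f, ?_, ?_⟩
    · intro t
      refine Fin.cases hxA hf1 t
    · rw [Fin.range_cons, span_insert, ← sup_assoc]
      exact hf2

lemma aux_final (k l : ℕ) (M : ℕ → ℕ → ℕ) :
    ∑ i ∈ Finset.range k, ∑ j ∈ Finset.range l,
        M i j * (∑ a ∈ Finset.range i, ∑ b ∈ Finset.range j, M a b)
      = ∑ i ∈ Finset.range k, ∑ i' ∈ Finset.Ioo i k, ∑ j ∈ Finset.range l,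
          ∑ j' ∈ Finset.Ioo j l, M i j * M i' j' := by
  rw [← aux_swap k (fun a i => ∑ j ∈ Finset.range l, ∑ j' ∈ Finset.Ioo j l, M a j * M i j')]
  refine Finset.sum_congr rfl fun i _ => ?_
  have hin : ∀ a, ∑ j ∈ Finset.range l, ∑ j' ∈ Finset.Ioo j l, M a j * M i j'
      = ∑ j' ∈ Finset.range l, ∑ j ∈ Finset.range j', M a j * M i j' := by
    intro a
    rw [← aux_swap l (fun j j' => M a j * M i j')]
  simp only [hin]
  rw [Finset.sum_comm]
  refine Finset.sum_congr rfl fun j' _ => ?_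
  rw [Finset.mul_sum]
  refine Finset.sum_congr rfl fun a _ => ?_
  rw [Finset.mul_sum]
  refine Finset.sum_congr rfl fun b _ => ?_
  ring

/-- Let `F, F'` be partial flags of types `α, β` in `𝕜^n` with relative position `M`
(i.e. `dim(F_i ∩ F'_j) = ∑_{i'≤i, j'≤j} M_{i',j'}`).  Then the set of nilpotent
endomorphisms `N` strictly compatible with both `F` and `F'` (i.e. `N(F_i) ⊆ F_{i−1}`
and `N(F'_j) ⊆ F'_{j−1}`) is a linear subspace of the endomorphism space of dimension
`∑_{i < i', j < j'} M_{i,j} M_{i',j'}`. -/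
theorem stmt_14 (𝕜 : Type*) [Field 𝕜] (n k l : ℕ) (α β : ℕ → ℕ)
    (hαsupp : ∀ i, k ≤ i → α i = 0) (hαsum : ∑ i ∈ Finset.range k, α i = n)
    (hβsupp : ∀ j, l ≤ j → β j = 0) (hβsum : ∑ j ∈ Finset.range l, β j = n)
    (M : ℕ → ℕ → ℕ) (hMsupp : ∀ i j, k ≤ i ∨ l ≤ j → M i j = 0)
    (hMrow : ∀ i, ∑ j ∈ Finset.range l, M i j = α i)
    (hMcol : ∀ j, ∑ i ∈ Finset.range k, M i j = β j)
    (Fl : Fin (k + 1) → Submodule 𝕜 (Fin n → 𝕜))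
    (hFmono : Monotone Fl) (hF0 : Fl 0 = ⊥) (hFtop : Fl (Fin.last k) = ⊤)
    (hFdim : ∀ i : Fin (k + 1), Module.finrank 𝕜 (Fl i) = ∑ r ∈ Finset.range (i : ℕ), α r)
    (Fl' : Fin (l + 1) → Submodule 𝕜 (Fin n → 𝕜))
    (hF'mono : Monotone Fl') (hF'0 : Fl' 0 = ⊥) (hF'top : Fl' (Fin.last l) = ⊤)
    (hF'dim : ∀ j : Fin (l + 1), Module.finrank 𝕜 (Fl' j) = ∑ r ∈ Finset.range (j : ℕ), β r)
    (hrel : ∀ (i : Fin (k + 1)) (j : Fin (l + 1)),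
        Module.finrank 𝕜 ((Fl i ⊓ Fl' j : Submodule 𝕜 (Fin n → 𝕜)))
          = ∑ i' ∈ Finset.range (i : ℕ), ∑ j' ∈ Finset.range (j : ℕ), M i' j') :
    ∃ p : Submodule 𝕜 ((Fin n → 𝕜) →ₗ[𝕜] (Fin n → 𝕜)),
      (∀ N : (Fin n → 𝕜) →ₗ[𝕜] (Fin n → 𝕜), N ∈ p ↔
        (IsNilpotent N ∧
          (∀ i : Fin k, ∀ x ∈ Fl i.succ, N x ∈ Fl i.castSucc) ∧
          (∀ j : Fin l, ∀ x ∈ Fl' j.succ, N x ∈ Fl' j.castSucc))) ∧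
      Module.finrank 𝕜 p
        = ∑ i ∈ Finset.range k, ∑ i' ∈ Finset.Ioo i k, ∑ j ∈ Finset.range l,
            ∑ j' ∈ Finset.Ioo j l, M i j * M i' j' := by
  classical
  have hcs : ∀ i : Fin k, Fl i.castSucc ≤ Fl i.succ := fun i => hFmono (Fin.castSucc_le_succ i)
  have hcs' : ∀ j : Fin l, Fl' j.castSucc ≤ Fl' j.succ := fun j => hF'mono (Fin.castSucc_le_succ j)
  -- the complement pieces
  have hBle : ∀ (i : Fin k) (j : Fin l),
      (Fl i.castSucc ⊓ Fl' j.succ) ⊔ (Fl i.succ ⊓ Fl' j.castSucc) ≤ Fl i.succ ⊓ Fl' j.succ :=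
    fun i j => sup_le (inf_le_inf (hcs i) le_rfl) (inf_le_inf le_rfl (hcs' j))
  have hinf : ∀ (i : Fin k) (j : Fin l),
      (Fl i.castSucc ⊓ Fl' j.succ) ⊓ (Fl i.succ ⊓ Fl' j.castSucc)
        = Fl i.castSucc ⊓ Fl' j.castSucc := by
    intro i j
    apply le_antisymm
    · exact le_inf (inf_le_left.trans inf_le_left) (inf_le_right.trans inf_le_right)
    · exact le_inf (le_inf inf_le_left ((inf_le_right).trans (hcs' j)))
        (le_inf (inf_le_left.trans (hcs i)) inf_le_right)
  have hdimB : ∀ (i : Fin k) (j : Fin l),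
      finrank 𝕜 ((Fl i.succ ⊓ Fl' j.succ : Submodule 𝕜 (Fin n → 𝕜)))
        = finrank 𝕜 (((Fl i.castSucc ⊓ Fl' j.succ) ⊔ (Fl i.succ ⊓ Fl' j.castSucc) :
            Submodule 𝕜 (Fin n → 𝕜))) + M i j := by
    intro i j
    have h0 := Submodule.finrank_sup_add_finrank_inf_eq (Fl i.castSucc ⊓ Fl' j.succ)
      (Fl i.succ ⊓ Fl' j.castSucc)
    rw [hinf i j] at h0
    simp only [hrel, Fin.val_succ, Fin.coe_castSucc] at h0 ⊢
    have e1 := Finset.sum_range_succ (fun a => ∑ b ∈ Finset.range ((j : ℕ) + 1), M a b) (i : ℕ)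
    have e2 := Finset.sum_range_succ (fun a => ∑ b ∈ Finset.range (j : ℕ), M a b) (i : ℕ)
    have e3 := Finset.sum_range_succ (fun b => M (i : ℕ) b) (j : ℕ)
    omega
  have He : ∀ q : Fin k × Fin l, ∃ f : Fin (M q.1 q.2) → (Fin n → 𝕜),
      (∀ t, f t ∈ Fl q.1.succ ⊓ Fl' q.2.succ) ∧
      ((Fl q.1.castSucc ⊓ Fl' q.2.succ) ⊔ (Fl q.1.succ ⊓ Fl' q.2.castSucc))
          ⊔ span 𝕜 (Set.range f) = Fl q.1.succ ⊓ Fl' q.2.succ :=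
    fun q => aux_extend (M q.1 q.2) _ _ (hBle q.1 q.2) (hdimB q.1 q.2)
  choose e he1 he2 using He
  -- the span property
  have hspan : ∀ (i : Fin (k + 1)) (j : Fin (l + 1)),
      span 𝕜 ((fun x : Σ q : Fin k × Fin l, Fin (M q.1 q.2) => e x.1 x.2) ''
        {x | (x.1.1 : ℕ) < (i : ℕ) ∧ (x.1.2 : ℕ) < (j : ℕ)}) = Fl i ⊓ Fl' j := by
    intro i
    induction i using Fin.induction with
    | zero =>
      intro j
      have hs : {x : Σ q : Fin k × Fin l, Fin (M q.1 q.2) |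
          (x.1.1 : ℕ) < ((0 : Fin (k + 1)) : ℕ) ∧ (x.1.2 : ℕ) < (j : ℕ)} = ∅ := by
        ext x; simp
      rw [hs, Set.image_empty, span_empty, hF0, bot_inf_eq]
    | succ i ih =>
      intro j
      induction j using Fin.induction with
      | zero =>
        have hs : {x : Σ q : Fin k × Fin l, Fin (M q.1 q.2) |
            (x.1.1 : ℕ) < (i.succ : ℕ) ∧ (x.1.2 : ℕ) < ((0 : Fin (l + 1)) : ℕ)} = ∅ := by
          ext x; simp
        rw [hs, Set.image_empty, span_empty, hF'0, inf_bot_eq]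
      | succ j ihj =>
        have hsets : {x : Σ q : Fin k × Fin l, Fin (M q.1 q.2) |
              (x.1.1 : ℕ) < (i.succ : ℕ) ∧ (x.1.2 : ℕ) < (j.succ : ℕ)}
            = ({x | (x.1.1 : ℕ) < (i.castSucc : ℕ) ∧ (x.1.2 : ℕ) < (j.succ : ℕ)}
              ∪ {x | (x.1.1 : ℕ) < (i.succ : ℕ) ∧ (x.1.2 : ℕ) < (j.castSucc : ℕ)})
              ∪ {x | x.1 = (i, j)} := by
          ext x
          simp only [Set.mem_setOf_eq, Set.mem_union, Fin.val_succ, Fin.coe_castSucc,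
            Prod.ext_iff, Fin.ext_iff]
          have := x.1.1.is_lt
          have := x.1.2.is_lt
          omega
        have himg : (fun x : Σ q : Fin k × Fin l, Fin (M q.1 q.2) => e x.1 x.2) ''
            {x | x.1 = (i, j)} = Set.range (e (i, j)) := by
          ext y
          constructor
          · rintro ⟨⟨q, t⟩, hq, rfl⟩
            simp only [Set.mem_setOf_eq] at hq
            subst hq
            exact ⟨t, rfl⟩
          · rintro ⟨t, rfl⟩
            exact ⟨⟨(i, j), t⟩, rfl, rfl⟩
        rw [hsets, Set.image_union, Set.image_union, span_union, span_union, himg,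
          ih j.succ, ihj]
        exact he2 (i, j)
  have htop : ⊤ ≤ span 𝕜 (Set.range
      (fun x : Σ q : Fin k × Fin l, Fin (M q.1 q.2) => e x.1 x.2)) := by
    have hu : {x : Σ q : Fin k × Fin l, Fin (M q.1 q.2) |
        (x.1.1 : ℕ) < ((Fin.last k : Fin (k + 1)) : ℕ) ∧
          (x.1.2 : ℕ) < ((Fin.last l : Fin (l + 1)) : ℕ)} = Set.univ := by
      ext x
      simp [Fin.val_last, x.1.1.is_lt, x.1.2.is_lt]
    have h := hspan (Fin.last k) (Fin.last l)
    rw [hu, Set.image_univ, hFtop, hF'top, top_inf_eq] at h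
    exact h.ge
  have hcard : Fintype.card (Σ q : Fin k × Fin l, Fin (M q.1 q.2))
      = finrank 𝕜 (Fin n → 𝕜) := by
    rw [Module.finrank_fin_fun, Fintype.card_sigma]
    simp only [Fintype.card_fin]
    rw [Fintype.sum_prod_type]
    calc ∑ x : Fin k, ∑ y : Fin l, M x y = ∑ x : Fin k, α x := by
          refine Finset.sum_congr rfl fun x _ => ?_
          rw [Fin.sum_univ_eq_sum_range (fun j => M (x : ℕ) j) l, hMrow]
      _ = n := by rw [Fin.sum_univ_eq_sum_range (fun i => α i) k]; exact hαsum
  set bas : Basis (Σ q : Fin k × Fin l, Fin (M q.1 q.2)) 𝕜 (Fin n → 𝕜) :=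
    basisOfTopLeSpanOfCardEqFinrank _ htop hcard with hbasdef
  have hbas : ∀ x : Σ q : Fin k × Fin l, Fin (M q.1 q.2), bas x = e x.1 x.2 := by
    intro x
    rw [hbasdef, coe_basisOfTopLeSpanOfCardEqFinrank]
  have hmem : ∀ N : (Fin n → 𝕜) →ₗ[𝕜] (Fin n → 𝕜),
      (N ∈ ⨅ x : Σ q : Fin k × Fin l, Fin (M q.1 q.2),
        Submodule.comap (LinearMap.applyₗ (e x.1 x.2))
          (Fl x.1.1.castSucc ⊓ Fl' x.1.2.castSucc)) ↔
      ∀ x : Σ q : Fin k × Fin l, Fin (M q.1 q.2),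
        N (e x.1 x.2) ∈ Fl x.1.1.castSucc ⊓ Fl' x.1.2.castSucc := by
    intro N
    simp [Submodule.mem_iInf, Submodule.mem_comap, LinearMap.applyₗ_apply_apply]
  refine ⟨⨅ x : Σ q : Fin k × Fin l, Fin (M q.1 q.2),
    Submodule.comap (LinearMap.applyₗ (e x.1 x.2)) (Fl x.1.1.castSucc ⊓ Fl' x.1.2.castSucc),
    ?_, ?_⟩
  · intro N
    rw [hmem N]
    constructor
    · intro h
      have hF : ∀ i : Fin k, ∀ x ∈ Fl i.succ, N x ∈ Fl i.castSucc := by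
        intro i x hx
        have hxs : x ∈ span 𝕜 ((fun x : Σ q : Fin k × Fin l, Fin (M q.1 q.2) => e x.1 x.2) ''
            {x | (x.1.1 : ℕ) < (i.succ : ℕ) ∧ (x.1.2 : ℕ) < ((Fin.last l : Fin (l + 1)) : ℕ)}) := by
          rw [hspan i.succ (Fin.last l), hF'top, inf_top_eq]
          exact hx
        have hmap := Submodule.mem_map_of_mem (f := N) hxs
        rw [Submodule.map_span] at hmap
        refine span_le.mpr ?_ hmap
        rintro _ ⟨_, ⟨x0, hx0, rfl⟩, rfl⟩
        simp only [Set.mem_setOf_eq, Fin.val_succ] at hx0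
        have hle : x0.1.1.castSucc ≤ i.castSucc := by
          simp only [Fin.le_def, Fin.coe_castSucc]
          omega
        simp only [SetLike.mem_coe]
        exact hFmono hle (Submodule.mem_inf.mp (h x0)).1
      have hF' : ∀ j : Fin l, ∀ x ∈ Fl' j.succ, N x ∈ Fl' j.castSucc := by
        intro j x hx
        have hxs : x ∈ span 𝕜 ((fun x : Σ q : Fin k × Fin l, Fin (M q.1 q.2) => e x.1 x.2) ''
            {x | (x.1.1 : ℕ) < ((Fin.last k : Fin (k + 1)) : ℕ) ∧ (x.1.2 : ℕ) < (j.succ : ℕ)}) := by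
          rw [hspan (Fin.last k) j.succ, hFtop, top_inf_eq]
          exact hx
        have hmap := Submodule.mem_map_of_mem (f := N) hxs
        rw [Submodule.map_span] at hmap
        refine span_le.mpr ?_ hmap
        rintro _ ⟨_, ⟨x0, hx0, rfl⟩, rfl⟩
        simp only [Set.mem_setOf_eq, Fin.val_succ] at hx0
        have hle : x0.1.2.castSucc ≤ j.castSucc := by
          simp only [Fin.le_def, Fin.coe_castSucc]
          omega
        simp only [SetLike.mem_coe]
        exact hF'mono hle (Submodule.mem_inf.mp (h x0)).2
      have hz : ∀ i : Fin (k + 1), ∀ x ∈ Fl i, (N ^ (i : ℕ)) x = 0 := by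
        intro i
        induction i using Fin.induction with
        | zero =>
          intro x hx
          rw [hF0, Submodule.mem_bot] at hx
          simp [hx]
        | succ i ih =>
          intro x hx
          have h1 := ih (N x) (hF i x hx)
          rw [Fin.val_succ, pow_succ, Module.End.mul_apply]
          simpa using h1
      refine ⟨⟨k, ?_⟩, hF, hF'⟩
      apply LinearMap.ext
      intro x
      have := hz (Fin.last k) x (by rw [hFtop]; trivial)
      simpa [Fin.val_last] using this
    · rintro ⟨-, h2, h3⟩ x
      exact Submodule.mem_inf.mpr
        ⟨h2 x.1.1 _ (Submodule.mem_inf.mp (he1 x.1 x.2)).1,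
         h3 x.1.2 _ (Submodule.mem_inf.mp (he1 x.1 x.2)).2⟩
  · -- dimension computation
    let φ : ↥(⨅ x : Σ q : Fin k × Fin l, Fin (M q.1 q.2),
        Submodule.comap (LinearMap.applyₗ (e x.1 x.2))
          (Fl x.1.1.castSucc ⊓ Fl' x.1.2.castSucc)) →ₗ[𝕜]
        (∀ x : Σ q : Fin k × Fin l, Fin (M q.1 q.2),
          (Fl x.1.1.castSucc ⊓ Fl' x.1.2.castSucc : Submodule 𝕜 (Fin n → 𝕜))) :=
      { toFun := fun N x => ⟨N.1 (e x.1 x.2), (hmem N.1).mp N.2 x⟩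
        map_add' := fun N N' => by
          funext x
          apply Subtype.ext
          simp
          rfl
        map_smul' := fun c N => by
          funext x
          apply Subtype.ext
          simp
          rfl }
    have hbij : Function.Bijective φ := by
      constructor
      · intro N N' hNN'
        apply Subtype.ext
        apply bas.ext
        intro x
        rw [hbas x]
        exact Subtype.ext_iff.mp (congrFun hNN' x)
      · intro u
        have hmemN : bas.constr 𝕜 (fun x => (u x : Fin n → 𝕜)) ∈
            ⨅ x : Σ q : Fin k × Fin l, Fin (M q.1 q.2),
              Submodule.comap (LinearMap.applyₗ (e x.1 x.2))
                (Fl x.1.1.castSucc ⊓ Fl' x.1.2.castSucc) := by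
          rw [hmem]
          intro x
          rw [show e x.1 x.2 = bas x from (hbas x).symm, Basis.constr_basis]
          exact (u x).2
        refine ⟨⟨_, hmemN⟩, ?_⟩
        funext x
        apply Subtype.ext
        show bas.constr 𝕜 (fun x => (u x : Fin n → 𝕜)) (e x.1 x.2) = u x
        rw [show e x.1 x.2 = bas x from (hbas x).symm, Basis.constr_basis]
    rw [LinearEquiv.finrank_eq (LinearEquiv.ofBijective φ hbij), Module.finrank_pi_fintype]
    rw [← Finset.univ_sigma_univ, Finset.sum_sigma]
    simp only [Finset.sum_const, Finset.card_univ, Fintype.card_fin, smul_eq_mul]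
    rw [Fintype.sum_prod_type]
    simp only [hrel, Fin.coe_castSucc]
    simp only [Finset.sum_const, Finset.card_univ, Fintype.card_fin, smul_eq_mul]
    have h1 : ∀ a : ℕ, ∑ y : Fin l, M a (y : ℕ) *
          (∑ a' ∈ Finset.range a, ∑ b' ∈ Finset.range (y : ℕ), M a' b')
        = ∑ j ∈ Finset.range l, M a j *
          (∑ a' ∈ Finset.range a, ∑ b' ∈ Finset.range j, M a' b') := by
      intro a
      exact Fin.sum_univ_eq_sum_range
        (fun j => M a j * (∑ a' ∈ Finset.range a, ∑ b' ∈ Finset.range j, M a' b')) l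
    rw [show (∑ x : Fin k, ∑ y : Fin l, M (x : ℕ) (y : ℕ) *
          (∑ a' ∈ Finset.range (x : ℕ), ∑ b' ∈ Finset.range (y : ℕ), M a' b'))
        = ∑ i ∈ Finset.range k, ∑ j ∈ Finset.range l, M i j *
          (∑ a' ∈ Finset.range i, ∑ b' ∈ Finset.range j, M a' b') from by
      simp only [h1]
      exact Fin.sum_univ_eq_sum_range
        (fun i => ∑ j ∈ Finset.range l, M i j *
          (∑ a' ∈ Finset.range i, ∑ b' ∈ Finset.range j, M a' b')) k]
    exact aux_final k l M
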